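/- (Monotone convergence for hybrid CVI/VI) Consider a finite MDP with nonnegative bounded rewards and discount $\gamma\in(0,1)$. Suppose a sequence $V_0 = 0, V_1, V_2, \dots$ is generated by interleaving clustered Bellman updates and full Bellman updates, such that each update is monotone nondecreasing and full Bellman updates $\mathbf{T}$ are applied infinitely often. Then $V_k \to V^*$, the optimal value, as $k \to \infty$. -/

import Mathlib

open Filter Finset

/-- Monotone convergence of the hybrid CVI/VI scheme to the optimal value. -/
theorem hybrid_cvi_vi_convergence {S A : Type*} [Fintype S] [Fintype A]
    [Nonempty S] [Nonempty A]
    (p : S → A → S → ℝ) (hp_nonneg : ∀ s a s', 0 ≤ p s a s')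
    (hp_sum : ∀ s a, ∑ s', p s a s' = 1)
    (r : S → A → ℝ) (hr_nonneg : ∀ s a, 0 ≤ r s a)
    (R : ℝ) (hR : ∀ s a, r s a ≤ R)
    (γ : ℝ) (hγ0 : 0 < γ) (hγ1 : γ < 1)
    (T : (S → ℝ) → (S → ℝ))
    (hT : ∀ V s, T V s = ⨆ a : A, ∑ s', p s a s' * (r s a + γ * V s'))
    (Vstar : S → ℝ) (hfix : T Vstar = Vstar)
    (V : ℕ → S → ℝ) (hV0 : V 0 = 0)
    (hmono : ∀ k s, V k s ≤ V (k + 1) s)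
    (hdom : ∀ k s, V (k + 1) s ≤ T (V k) s)
    (hinf : ∀ m, ∃ k, m ≤ k ∧ V (k + 1) = T (V k)) :
    ∀ s, Tendsto (fun k => V k s) atTop (nhds (Vstar s)) := by
  classical
  have bdd : ∀ (f : A → ℝ), BddAbove (Set.range f) :=
    fun f => (Set.finite_range f).bddAbove
  -- T is monotone
  have hTmono : ∀ U W : S → ℝ, (∀ s, U s ≤ W s) → ∀ s, T U s ≤ T W s := by
    intro U W h s
    rw [hT, hT]
    apply ciSup_mono (bdd _)
    intro a
    apply Finset.sum_le_sum
    intro s' _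
    have hh : r s a + γ * U s' ≤ r s a + γ * W s' := by
      have := mul_le_mul_of_nonneg_left (h s') hγ0.le
      linarith
    exact mul_le_mul_of_nonneg_left hh (hp_nonneg s a s')
  -- shifted bound: if U ≤ W + M then T U ≤ T W + γ M
  have hshift : ∀ (U W : S → ℝ) (M : ℝ), (∀ s', U s' ≤ W s' + M) →
      ∀ s, T U s ≤ T W s + γ * M := by
    intro U W M h s
    rw [hT]
    apply ciSup_le
    intro a
    have h1 : ∑ s', p s a s' * (r s a + γ * U s')
        ≤ ∑ s', p s a s' * (r s a + γ * W s') + γ * M := by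
      have h2 : ∑ s', p s a s' * (r s a + γ * U s')
          ≤ ∑ s', (p s a s' * (r s a + γ * W s') + p s a s' * (γ * M)) := by
        apply Finset.sum_le_sum
        intro s' _
        have hh : r s a + γ * U s' ≤ r s a + γ * W s' + γ * M := by
          have := mul_le_mul_of_nonneg_left (h s') hγ0.le
          linarith
        have := mul_le_mul_of_nonneg_left hh (hp_nonneg s a s')
        linarith
      rw [Finset.sum_add_distrib, ← Finset.sum_mul, hp_sum] at h2
      linarith
    have h2 : ∑ s', p s a s' * (r s a + γ * W s') ≤ T W s := by
      rw [hT]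
      exact le_ciSup (f := fun a => ∑ s', p s a s' * (r s a + γ * W s')) (bdd _) a
    linarith
  -- Vstar is nonnegative
  have hVstar_nonneg : ∀ s, 0 ≤ Vstar s := by
    obtain ⟨s0, -, hs0⟩ := Finset.exists_min_image Finset.univ Vstar
      ⟨Classical.arbitrary S, Finset.mem_univ _⟩
    have key : γ * Vstar s0 ≤ Vstar s0 := by
      conv_rhs => rw [← hfix]
      rw [hT]
      obtain ⟨a⟩ := (inferInstance : Nonempty A)
      refine le_trans ?_ (le_ciSup (bdd _) a)
      have h2 : ∑ s', p s0 a s' * (γ * Vstar s0)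
          ≤ ∑ s', p s0 a s' * (r s0 a + γ * Vstar s') := by
        apply Finset.sum_le_sum
        intro s' _
        have h1 := hs0 s' (Finset.mem_univ _)
        have hh : γ * Vstar s0 ≤ r s0 a + γ * Vstar s' := by
          have := mul_le_mul_of_nonneg_left h1 hγ0.le
          linarith [hr_nonneg s0 a]
        exact mul_le_mul_of_nonneg_left hh (hp_nonneg s0 a s')
      rwa [← Finset.sum_mul, hp_sum, one_mul] at h2
    have h0 : 0 ≤ Vstar s0 := by nlinarith
    intro s
    exact le_trans h0 (hs0 s (Finset.mem_univ _))
  -- V k ≤ Vstar for all k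
  have hle : ∀ k s, V k s ≤ Vstar s := by
    intro k
    induction k with
    | zero => intro s; simp [hV0]; exact hVstar_nonneg s
    | succ k ih =>
      intro s
      calc V (k + 1) s ≤ T (V k) s := hdom k s
        _ ≤ T Vstar s := hTmono _ _ ih s
        _ = Vstar s := by rw [hfix]
  have hVmono : ∀ s, Monotone fun k => V k s :=
    fun s => monotone_nat_of_le_succ (fun k => hmono k s)
  have bddV : ∀ s, BddAbove (Set.range fun k => V k s) := by
    intro s
    exact ⟨Vstar s, by rintro x ⟨k, rfl⟩; exact hle k s⟩
  set L : S → ℝ := fun s => ⨆ k, V k s with hL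
  have hVleL : ∀ k s, V k s ≤ L s := fun k s => le_ciSup (bddV s) k
  have hLle : ∀ s, L s ≤ Vstar s := fun s => ciSup_le (fun k => hle k s)
  -- L ≤ T L
  have hLTL : ∀ s, L s ≤ T L s := by
    intro s
    apply ciSup_le
    intro k
    calc V k s ≤ V (k + 1) s := hmono k s
      _ ≤ T (V k) s := hdom k s
      _ ≤ T L s := hTmono _ _ (fun s' => hVleL k s') s
  -- T L ≤ L
  have hTLL : ∀ s, T L s ≤ L s := by
    intro s
    apply le_of_forall_pos_le_add
    intro ε hε
    set ε' := ε / γ with hε'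
    have hε'pos : 0 < ε' := div_pos hε hγ0
    have hN : ∀ s', ∃ N, L s' < V N s' + ε' := by
      intro s'
      have hstep : L s' - ε' < ⨆ k, V k s' := by
        have : (⨆ k, V k s') = L s' := rfl
        rw [this]; linarith
      obtain ⟨k, hk⟩ := exists_lt_of_lt_ciSup hstep
      exact ⟨k, by linarith⟩
    choose N hNspec using hN
    set N0 := Finset.univ.sup N with hN0
    obtain ⟨k, hkN, hkfull⟩ := hinf N0
    have hLk : ∀ s', L s' ≤ V k s' + ε' := by
      intro s'
      have h1 : N s' ≤ k := le_trans (Finset.le_sup (Finset.mem_univ s')) hkN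
      have h2 := hVmono s' h1
      have h3 := hNspec s'
      simp only at h2
      linarith
    have h4 : T L s ≤ T (V k) s + γ * ε' := hshift L (V k) ε' hLk s
    have h5 : T (V k) s = V (k + 1) s := by rw [hkfull]
    have h6 : γ * ε' = ε := by have := hγ0.ne'; rw [hε']; field_simp
    calc T L s ≤ T (V k) s + γ * ε' := h4
      _ = V (k + 1) s + ε := by rw [h5, h6]
      _ ≤ L s + ε := by linarith [hVleL (k + 1) s]
  -- contraction: Vstar ≤ L
  have hLV : ∀ s, L s = Vstar s := by
    obtain ⟨s0, -, hs0⟩ := Finset.exists_max_image Finset.univ (fun s => Vstar s - L s)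
      ⟨Classical.arbitrary S, Finset.mem_univ _⟩
    set M := Vstar s0 - L s0 with hMdef
    have hM : ∀ s', Vstar s' ≤ L s' + M := by
      intro s'
      have := hs0 s' (Finset.mem_univ _)
      linarith
    have hM0 : 0 ≤ M := by have := hLle s0; simp only [hMdef]; linarith
    have hcontr : Vstar s0 ≤ L s0 + γ * M := by
      have h1 : T Vstar s0 ≤ T L s0 + γ * M := hshift Vstar L M hM s0
      rw [hfix] at h1
      linarith [hTLL s0]
    have hMle : M ≤ 0 := by nlinarith
    intro s
    refine le_antisymm (hLle s) ?_
    have := hM s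
    linarith
  intro s
  have := tendsto_atTop_ciSup (hVmono s) (bddV s)
  rwa [show (⨆ k, V k s) = Vstar s from (hLV s)] at this
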